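/- Let K be a number field that is not a CM-field, and let σ: K → ℂ be an embedding with σ(K) ⊄ ℝ (a complex embedding). Let F = σ^{−1}(ℝ) = {t ∈ K : σ(t) ∈ ℝ}, and suppose F ≠ ℚ. Then there exist two embeddings σ_k, σ_l: K → ℂ such that: neither σ_k nor σ_l is equal to σ or to the complex conjugate embedding σ̄; σ_k ≠ σ_l and σ_k is not the complex conjugate of σ_l; and |σ_k(t)| = |σ_l(t)| for all t ∈ F. (Equivalently: there are two distinct infinite places of K, both different from the infinite place determined by σ, whose associated absolute values agree on F.) -/

import Mathlib

open scoped BigOperators NumberField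
open NumberField

noncomputable section

/-- `SL_d(ℤ)`. -/
abbrev SLZ (d : ℕ) := Matrix.SpecialLinearGroup (Fin d) ℤ

/-- A family of elements of a group is multiplicatively independent if no nontrivial integer
power combination of its members is the identity. -/
def MulIndepFam {H : Type*} [Group H] {k : ℕ} (f : Fin k → H) : Prop :=
  ∀ c : Fin k → ℤ, (List.ofFn fun i => f i ^ c i).prod = 1 → c = 0

/-- The (torsion-free) rank of a subgroup is at least `k`. -/
def RankGE {H : Type*} [Group H] (G : Subgroup H) (k : ℕ) : Prop :=
  ∃ f : Fin k → H, (∀ i, f i ∈ G) ∧ MulIndepFam f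

/-- The subgroup of units of `𝓞 K` lying in a subfield `F` of `K`; it is canonically
isomorphic to the unit group of the ring of integers of `F`. -/
def unitsInSubfield (K : Type*) [Field K] (F : Subfield K) : Subgroup (𝓞 K)ˣ where
  carrier := {u | algebraMap (𝓞 K) K ((u : (𝓞 K)ˣ) : 𝓞 K) ∈ F}
  one_mem' := by simpa using F.one_mem
  mul_mem' := by
    intro a b ha hb
    simpa using F.mul_mem ha hb
  inv_mem' := by
    intro a ha
    show algebraMap (𝓞 K) K ((a⁻¹ : (𝓞 K)ˣ) : 𝓞 K) ∈ F
    have h : algebraMap (𝓞 K) K ((a⁻¹ : (𝓞 K)ˣ) : 𝓞 K)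
        * algebraMap (𝓞 K) K ((a : (𝓞 K)ˣ) : 𝓞 K) = 1 := by
      rw [← map_mul, Units.inv_mul, map_one]
    rw [eq_inv_of_mul_eq_one_left h]
    exact F.inv_mem ha

/-- `K` is a CM-field: it has a proper subfield `F` with `rank U_F = rank U_K`
(since `U_F ≤ U_K`, this is expressed as: every `k` with `rank U_K ≥ k` also has
`rank U_F ≥ k`). -/
def IsCM (K : Type*) [Field K] : Prop :=
  ∃ F : Subfield K, F ≠ ⊤ ∧
    ∀ k : ℕ, RankGE (⊤ : Subgroup (𝓞 K)ˣ) k → RankGE (unitsInSubfield K F) k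

/-- The logarithmic Mahler measure (base 2) of a unit of `𝓞 K`:
`h^Mah(u) = ∑_{σ : K →+* ℂ} log₊ |σ(u)|`. -/
def unitHMah (K : Type*) [Field K] [NumberField K] (u : (𝓞 K)ˣ) : ℝ :=
  ∑ σ : K →+* ℂ, max 0 (Real.logb 2 (‖σ (algebraMap (𝓞 K) K (u : 𝓞 K))‖))

/-- The size of (virtually) fundamental units of a subgroup `U ≤ U_K`: the infimum of all
`F > 0` such that the units of `U` of logarithmic Mahler measure at most `F` generate a
finite-index subgroup of `U`. -/
def fundSize (K : Type*) [Field K] [NumberField K] (U : Subgroup (𝓞 K)ˣ) : ℝ :=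
  sInf {F : ℝ | 0 < F ∧
    (Subgroup.closure {t : (𝓞 K)ˣ | t ∈ U ∧ unitHMah K t ≤ F}).relIndex U ≠ 0}

namespace Lem28Aux

open Module ComplexEmbedding

attribute [local instance] Classical.propDecidable

lemma mulIndep_iff {H : Type*} [CommGroup H] {k : ℕ} (f : Fin k → H) :
    MulIndepFam f ↔ ∀ c : Fin k → ℤ, ∏ i, f i ^ c i = 1 → c = 0 := by
  unfold MulIndepFam
  simp_rw [List.prod_ofFn]

lemma mulIndep_sub {H : Type*} [CommGroup H] {k m : ℕ} (hk : k ≤ m) {f : Fin m → H}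
    (hf : MulIndepFam f) : MulIndepFam (f ∘ Fin.castLE hk) := by
  rw [mulIndep_iff] at hf ⊢
  intro c hc
  classical
  set c' : Fin m → ℤ := fun j => if h : (j : ℕ) < k then c ⟨j, h⟩ else 0 with hc'
  have key : ∏ j ∈ Finset.univ.map (Fin.castLEEmb hk), f j ^ c' j
      = ∏ i : Fin k, (f ∘ Fin.castLE hk) i ^ c i := by
    rw [Finset.prod_map]
    refine Finset.prod_congr rfl fun i _ => ?_
    have : c' (Fin.castLEEmb hk i) = c i := by
      simp only [c']
      rw [dif_pos (by simpa using i.isLt)]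
      exact congrArg c (Fin.ext rfl)
    rw [this]
    rfl
  have h0 : ∏ j, f j ^ c' j = 1 := by
    rw [← Finset.prod_subset (Finset.subset_univ (Finset.univ.map (Fin.castLEEmb hk)))
      (fun j _ hj => ?_), key, hc]
    have hjk : ¬ (j : ℕ) < k := fun h =>
      hj (Finset.mem_map.mpr ⟨⟨(j : ℕ), h⟩, Finset.mem_univ _, Fin.ext rfl⟩)
    simp [c', hjk]
  have hz := hf c' h0
  funext i
  have h1 : c' (Fin.castLE hk i) = 0 := by rw [hz]; rfl
  have h2 : c' (Fin.castLE hk i) = c i := by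
    simp only [c']
    rw [dif_pos (by simpa using i.isLt)]
    exact congrArg c (Fin.ext rfl)
  rw [← h2, h1]; rfl

lemma mulIndep_map {G H : Type*} [CommGroup G] [CommGroup H] (φ : G →* H)
    (hφ : Function.Injective φ) {k : ℕ} {f : Fin k → G} (hf : MulIndepFam f) :
    MulIndepFam (fun i => φ (f i)) := by
  rw [mulIndep_iff] at hf ⊢
  intro c hc
  refine hf c (hφ ?_)
  rw [map_one, map_prod]
  simpa [map_zpow] using hc

variable {K : Type} [Field K] [NumberField K]

lemma prod_zpow_mem_torsion {k : ℕ} (f : Fin k → (𝓞 K)ˣ) (c : Fin k → ℤ)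
    (h : ∑ i, c i • Additive.ofMul (QuotientGroup.mk (s := Units.torsion K) (f i)) = 0) :
    (∏ i, f i ^ c i) ∈ Units.torsion K := by
  rw [← QuotientGroup.eq_one_iff]
  have : Additive.ofMul (QuotientGroup.mk (s := Units.torsion K) (∏ i, f i ^ c i)) = 0 := by
    rw [← h]
    push_cast [QuotientGroup.mk_prod, QuotientGroup.mk_zpow]
    rw [ofMul_prod]
    simp_rw [ofMul_zpow]
  exact Additive.ofMul.injective this

lemma mulIndep_card_le_rank {k : ℕ} {f : Fin k → (𝓞 K)ˣ} (hf : MulIndepFam f) :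
    k ≤ Units.rank K := by
  rw [mulIndep_iff] at hf
  letI : Module ℤ (Additive ((𝓞 K)ˣ ⧸ Units.torsion K)) :=
    AddCommGroup.toIntModule (Additive ((𝓞 K)ˣ ⧸ Units.torsion K))
  haveI : Module.Finite ℤ (Additive ((𝓞 K)ˣ ⧸ Units.torsion K)) :=
    Module.Finite.of_basis (Units.basisModTorsion K)
  have hli : LinearIndependent ℤ
      (fun i : Fin k => Additive.ofMul (QuotientGroup.mk (s := Units.torsion K) (f i))) := by
    rw [Fintype.linearIndependent_iff]
    intro c hc
    have hw := prod_zpow_mem_torsion f c hc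
    have hw' : IsOfFinOrder (∏ i, f i ^ c i) := hw
    rw [isOfFinOrder_iff_pow_eq_one] at hw'
    obtain ⟨n, hn, hw⟩ := hw'
    have : ∏ i, f i ^ ((n : ℤ) * c i) = 1 := by
      simp_rw [mul_comm (n : ℤ) _, zpow_mul, zpow_natCast]
      rw [Finset.prod_pow, hw]
    have := congrFun (hf _ this)
    intro i
    have hi := this i
    simp only [Pi.zero_apply, mul_eq_zero] at hi
    exact hi.resolve_left (by exact_mod_cast hn.ne')
  have := hli.fintype_card_le_finrank
  rwa [Fintype.card_fin, Units.rank_modTorsion] at this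

lemma fundSystem_indep : MulIndepFam (Units.fundSystem K) := by
  letI : Module ℤ (Additive ((𝓞 K)ˣ ⧸ Units.torsion K)) :=
    AddCommGroup.toIntModule (Additive ((𝓞 K)ˣ ⧸ Units.torsion K))
  rw [mulIndep_iff]
  intro c hc
  have h0 : ∑ i, c i • Additive.ofMul
      (QuotientGroup.mk (s := Units.torsion K) (Units.fundSystem K i)) = 0 := by
    simp_rw [← ofMul_zpow, ← ofMul_prod, ← QuotientGroup.mk_zpow, ← QuotientGroup.mk_prod, hc]
    rfl
  simp_rw [Units.fundSystem_mk] at h0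
  have := Fintype.linearIndependent_iff.mp (Units.basisModTorsion K).linearIndependent c h0
  funext i; exact this i

instance nfF (F : Subfield K) : NumberField ↥F := by
  haveI : FiniteDimensional ℚ ↥F := FiniteDimensional.of_injective
    (F.subtype.toRatAlgHom.toLinearMap) Subtype.val_injective
  exact ⟨⟩

lemma fdFK (F : Subfield K) : FiniteDimensional ↥F K := by
  haveI : IsScalarTower ℚ ↥F K := IsScalarTower.of_algebraMap_eq' (Subsingleton.elim _ _)
  exact FiniteDimensional.right ℚ ↥F K

/-- Counting extensions of an embedding of a subfield. -/
lemma ext_count (F : Subfield K) (τ : ↥F →+* ℂ) :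
    Fintype.card {φ : K →+* ℂ // φ.comp F.subtype = τ} = finrank ↥F K := by
  classical
  haveI := fdFK F
  letI : Algebra ↥F ℂ := τ.toAlgebra
  let e : (K →ₐ[↥F] ℂ) ≃ {φ : K →+* ℂ // φ.comp F.subtype = τ} :=
    { toFun := fun ψ => ⟨ψ.toRingHom, by ext x; exact ψ.commutes x⟩
      invFun := fun φ => ⟨φ.1, fun x => (RingHom.congr_fun φ.2 x)⟩
      left_inv := fun ψ => by ext; rfl
      right_inv := fun φ => by ext; rfl }
  rw [← Fintype.card_congr e, AlgHom.card]

def toKUnits (F : Subfield K) : (𝓞 ↥F)ˣ →* (𝓞 K)ˣ :=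
  Units.map (RingOfIntegers.mapRingHom F.subtype).toMonoidHom

lemma toKUnits_injective (F : Subfield K) : Function.Injective (toKUnits F) := by
  apply Units.map_injective
  intro x y h
  have h2 : (F.subtype x.1 : K) = F.subtype y.1 := congrArg (fun z : 𝓞 K => (z : K)) h
  exact NumberField.RingOfIntegers.ext (Subtype.val_injective h2)

lemma toKUnits_mem (F : Subfield K) (u : (𝓞 ↥F)ˣ) : toKUnits F u ∈ unitsInSubfield K F := by
  show algebraMap (𝓞 K) K _ ∈ F
  exact SetLike.coe_mem _

lemma rank_eq (F : Subfield K) (h2 : finrank ↥F K = 2)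
    (hreal : ∀ τ : ↥F →+* ℂ, ComplexEmbedding.IsReal τ)
    (hcx : ∀ φ : K →+* ℂ, ¬ ComplexEmbedding.IsReal φ) :
    Units.rank ↥F = Units.rank K := by
  haveI : IsScalarTower ℚ ↥F K := IsScalarTower.of_algebraMap_eq' (Subsingleton.elim _ _)
  have hK1 : InfinitePlace.nrRealPlaces K = 0 := by
    rw [← InfinitePlace.card_real_embeddings]
    exact Fintype.card_eq_zero_iff.2 ⟨fun φ => hcx φ.1 φ.2⟩
  have hF1 : InfinitePlace.nrComplexPlaces ↥F = 0 := by
    have h0 : Fintype.card { τ : ↥F →+* ℂ // ¬ComplexEmbedding.IsReal τ } = 0 :=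
      Fintype.card_eq_zero_iff.2 ⟨fun τ => τ.2 (hreal τ.1)⟩
    have := InfinitePlace.card_complex_embeddings ↥F
    omega
  have e1 := InfinitePlace.card_add_two_mul_card_eq_rank K
  have e2 := InfinitePlace.card_add_two_mul_card_eq_rank ↥F
  have e3 := InfinitePlace.card_eq_nrRealPlaces_add_nrComplexPlaces K
  have e4 := InfinitePlace.card_eq_nrRealPlaces_add_nrComplexPlaces ↥F
  have e5 : finrank ℚ ↥F * finrank ↥F K = finrank ℚ K := finrank_mul_finrank ℚ ↥F K
  rw [h2] at e5
  unfold Units.rank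
  omega

lemma isCM_of (F : Subfield K) (hne : F ≠ ⊤) (h2 : finrank ↥F K = 2)
    (hreal : ∀ τ : ↥F →+* ℂ, ComplexEmbedding.IsReal τ)
    (hcx : ∀ φ : K →+* ℂ, ¬ ComplexEmbedding.IsReal φ) : IsCM K := by
  refine ⟨F, hne, fun k hk => ?_⟩
  obtain ⟨f, -, hf⟩ := hk
  have hkr : k ≤ Units.rank ↥F := by
    rw [rank_eq F h2 hreal hcx]
    exact mulIndep_card_le_rank hf
  exact ⟨fun i => toKUnits F ((Units.fundSystem ↥F ∘ Fin.castLE hkr) i),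
    fun i => toKUnits_mem F _,
    mulIndep_map _ (toKUnits_injective F) (mulIndep_sub hkr fundSystem_indep)⟩

lemma eq_or_eq_of_card_le_two {α : Type*} [Fintype α] (h : Fintype.card α ≤ 2)
    {a b : α} (hab : a ≠ b) (x : α) : x = a ∨ x = b := by
  by_contra h'
  push_neg at h'
  exact absurd (Fintype.two_lt_card_iff.2 ⟨x, a, b, h'.1, h'.2, hab⟩) (by omega)

end Lem28Aux

/-- **Two further places agreeing on the maximal real subfield** (Lemma 2.8 of the paper).
Let `K` be a non-CM number field, `σ : K → ℂ` a complex embedding, and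
`F = σ⁻¹(ℝ) ≠ ℚ`. Then there are two embeddings `σ_k ≠ σ_l` of `K`, neither equal to `σ` or
its conjugate, with `σ_k` not conjugate to `σ_l`, such that `|σ_k(t)| = |σ_l(t)|` for all
`t ∈ F`. -/
theorem exists_places_agreeing_on_real_subfield (K : Type) [Field K] [NumberField K]
    (hK : ¬ IsCM K) (σ : K →+* ℂ) (hσ : ∃ t : K, (σ t).im ≠ 0)
    (hF : Subfield.comap σ Complex.ofRealHom.fieldRange ≠ ⊥) :
    ∃ σk σl : K →+* ℂ,
      σk ≠ σl ∧ σk ≠ (starRingEnd ℂ).comp σl ∧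
      σk ≠ σ ∧ σk ≠ (starRingEnd ℂ).comp σ ∧
      σl ≠ σ ∧ σl ≠ (starRingEnd ℂ).comp σ ∧
      ∀ t ∈ Subfield.comap σ Complex.ofRealHom.fieldRange,
        ‖σk t‖ = ‖σl t‖ := by
  classical
  set F : Subfield K := Subfield.comap σ Complex.ofRealHom.fieldRange with hFdef
  have hmemF : ∀ t : K, t ∈ F ↔ (starRingEnd ℂ) (σ t) = σ t := by
    intro t
    rw [hFdef, Subfield.mem_comap]
    constructor
    · rintro ⟨r, hr⟩
      rw [← hr]
      exact Complex.conj_ofReal r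
    · intro h
      rw [Complex.conj_eq_iff_im] at h
      exact ⟨(σ t).re, Complex.ext rfl (by simpa using h.symm)⟩
  have hconv : ∀ ρ : K →+* ℂ, (starRingEnd ℂ).comp ρ = ComplexEmbedding.conjugate ρ :=
    fun ρ => RingHom.ext fun x => rfl
  set τ0 : ↥F →+* ℂ := σ.comp F.subtype with hτ0def
  have hστ0 : σ.comp F.subtype = τ0 := rfl
  have hσcx : ¬ ComplexEmbedding.IsReal σ := by
    intro h
    obtain ⟨t, ht⟩ := hσ
    have h2 := RingHom.congr_fun (ComplexEmbedding.isReal_iff.1 h) t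
    rw [ComplexEmbedding.conjugate_coe_eq, Complex.conj_eq_iff_im] at h2
    exact ht h2
  have hσne : σ ≠ ComplexEmbedding.conjugate σ :=
    fun h => hσcx (ComplexEmbedding.isReal_iff.2 h.symm)
  have hconjσF : (ComplexEmbedding.conjugate σ).comp F.subtype = τ0 :=
    RingHom.ext fun x => (hmemF x.1).1 x.2
  have hτ0real : ComplexEmbedding.IsReal τ0 :=
    ComplexEmbedding.isReal_iff.2 (RingHom.ext fun x => (hmemF x.1).1 x.2)
  have hFtop : F ≠ ⊤ := by
    intro h
    obtain ⟨t, ht⟩ := hσ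
    have : t ∈ F := h ▸ Subfield.mem_top t
    rw [hmemF t, Complex.conj_eq_iff_im] at this
    exact ht this
  have hd2 : 2 ≤ Module.finrank ↥F K := by
    rw [← Lem28Aux.ext_count F τ0]
    exact Fintype.one_lt_card_iff.2 ⟨⟨σ, hστ0⟩, ⟨ComplexEmbedding.conjugate σ, hconjσF⟩,
      fun h => hσne (congrArg Subtype.val h)⟩
  have hQ : 1 < Module.finrank ℚ ↥F := by
    by_contra hle
    push_neg at hle
    have h1 : Module.finrank ℚ ↥F = 1 := le_antisymm hle Module.finrank_pos
    apply hF
    refine le_antisymm (fun x hx => ?_) bot_le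
    obtain ⟨c, hc⟩ := (finrank_eq_one_iff_of_nonzero' (1 : ↥F) one_ne_zero).1 h1 ⟨x, hx⟩
    have h3 : x = ((c • (1 : ↥F) : ↥F) : K) := by rw [hc]
    have h4 : ((c • (1 : ↥F) : ↥F) : K) = (F.subtype.comp (algebraMap ℚ ↥F)) c := by
      simp only [RingHom.coe_comp, Function.comp_apply]
      congr 1
      rw [Algebra.algebraMap_eq_smul_one]
    rw [h3, h4, eq_ratCast (F.subtype.comp (algebraMap ℚ ↥F)) c]
    exact SubfieldClass.ratCast_mem _ c
  obtain ⟨τ1, hτ1⟩ := Fintype.exists_ne_of_one_lt_card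
    (by rw [NumberField.Embeddings.card ↥F ℂ]; exact hQ) τ0
  by_cases hsucc : ∃ τ : ↥F →+* ℂ, τ ≠ τ0 ∧ ∃ ρ1 ρ2 : K →+* ℂ,
      ρ1.comp F.subtype = τ ∧ ρ2.comp F.subtype = τ ∧ ρ1 ≠ ρ2 ∧
      ρ1 ≠ ComplexEmbedding.conjugate ρ2
  · obtain ⟨τ, hτ, ρ1, ρ2, h1, h2, h12, h12c⟩ := hsucc
    refine ⟨ρ1, ρ2, h12, by rw [hconv]; exact h12c, ?_, ?_, ?_, ?_, ?_⟩
    · intro h; exact hτ (by rw [← h1, h, hστ0])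
    · intro h; exact hτ (by rw [← h1, h, hconv, hconjσF])
    · intro h; exact hτ (by rw [← h2, h, hστ0])
    · intro h; exact hτ (by rw [← h2, h, hconv, hconjσF])
    · intro t ht
      have e1 : ρ1 (F.subtype ⟨t, ht⟩) = τ ⟨t, ht⟩ := RingHom.congr_fun h1 _
      have e2 : ρ2 (F.subtype ⟨t, ht⟩) = τ ⟨t, ht⟩ := RingHom.congr_fun h2 _
      have : ρ1 t = ρ2 t := by simpa using e1.trans e2.symm
      rw [this]
  · push_neg at hsucc
    exfalso
    have hexts : ∀ τ : ↥F →+* ℂ, ∃ a b : {φ : K →+* ℂ // φ.comp F.subtype = τ}, a ≠ b := by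
      intro τ
      apply Fintype.one_lt_card_iff.1
      have := Lem28Aux.ext_count F τ
      omega
    have hreal : ∀ τ' : ↥F →+* ℂ, ComplexEmbedding.IsReal τ' := by
      intro τ'
      by_cases hth : τ' = τ0
      · rw [hth]; exact hτ0real
      · obtain ⟨a, b, hab⟩ := hexts τ'
        have h := hsucc τ' hth a.1 b.1 a.2 b.2 (fun h => hab (Subtype.ext h))
        rw [ComplexEmbedding.isReal_iff]
        ext x
        have e1 : a.1 (F.subtype x) = τ' x := RingHom.congr_fun a.2 x
        have e2 : b.1 (F.subtype x) = τ' x := RingHom.congr_fun b.2 x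
        have e3 : a.1 (F.subtype x) = (starRingEnd ℂ) (b.1 (F.subtype x)) := by
          rw [h]; rfl
        show (starRingEnd ℂ) (τ' x) = τ' x
        calc (starRingEnd ℂ) (τ' x) = (starRingEnd ℂ) (a.1 (F.subtype x)) := by rw [e1]
          _ = (starRingEnd ℂ) ((starRingEnd ℂ) (b.1 (F.subtype x))) := by rw [← e3]
          _ = b.1 (F.subtype x) := Complex.conj_conj _
          _ = τ' x := e2
    have h2fin : Module.finrank ↥F K = 2 := by
      refine le_antisymm ?_ hd2
      rw [← Lem28Aux.ext_count F τ1]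
      by_contra hgt
      push_neg at hgt
      obtain ⟨a, b, c, hab, hac, hbc⟩ := (Fintype.two_lt_card_iff (α := {φ : K →+* ℂ // φ.comp F.subtype = τ1})).1 (by omega)
      have ha := hsucc τ1 hτ1 a.1 b.1 a.2 b.2 (fun h => hab (Subtype.ext h))
      have hb := hsucc τ1 hτ1 a.1 c.1 a.2 c.2 (fun h => hac (Subtype.ext h))
      apply hbc
      apply Subtype.ext
      have h3 := congrArg star (ha.symm.trans hb)
      simpa [star_star] using h3
    have hcx : ∀ φ : K →+* ℂ, ¬ ComplexEmbedding.IsReal φ := by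
      intro φ hφre
      by_cases hres : φ.comp F.subtype = τ0
      · have hcard : Fintype.card {ψ : K →+* ℂ // ψ.comp F.subtype = τ0} ≤ 2 := by
          rw [Lem28Aux.ext_count, h2fin]
        have hor := Lem28Aux.eq_or_eq_of_card_le_two hcard
          (a := ⟨σ, hστ0⟩) (b := ⟨ComplexEmbedding.conjugate σ, hconjσF⟩)
          (fun h => hσne (congrArg Subtype.val h)) ⟨φ, hres⟩
        rcases hor with h | h
        · have hv : φ = σ := congrArg Subtype.val h
          rw [hv] at hφre
          exact hσcx hφre
        · have hv : φ = ComplexEmbedding.conjugate σ := congrArg Subtype.val h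
          rw [hv, ComplexEmbedding.isReal_conjugate_iff] at hφre
          exact hσcx hφre
      · obtain ⟨a, b, hab⟩ := hexts (φ.comp F.subtype)
        obtain ⟨ρ', hρ'ext, hρ'ne⟩ : ∃ ρ' : K →+* ℂ,
            ρ'.comp F.subtype = φ.comp F.subtype ∧ ρ' ≠ φ := by
          by_cases ha : a.1 = φ
          · exact ⟨b.1, b.2, fun h => hab (Subtype.ext (ha.trans h.symm))⟩
          · exact ⟨a.1, a.2, ha⟩
        have h := hsucc (φ.comp F.subtype) hres ρ' φ hρ'ext rfl hρ'ne
        rw [ComplexEmbedding.isReal_iff.1 hφre] at h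
        exact hρ'ne h
    exact hK (Lem28Aux.isCM_of F hFtop h2fin hreal hcx)

end
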